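/- Let (B, s, t) be a bi-submersion over a singular foliation F on M. Then every internal symmetry X ∈ F admits a lift to B: there exists X̃ ∈ X(B) which is s-projectable onto X and t-projectable onto X. Moreover X̃ can be written X̃ = X⃗ + X⃖ where X⃗ ∈ Γ(ker ds) is t-related to X and X⃖ ∈ Γ(ker dt) is s-related to X. -/
import Mathlib


/-!
STATEMENT 19: Let `(B, s, t)` be a bi-submersion over a singular foliation `F` on `M`.  Every
internal symmetry `X ∈ F` admits a lift `X̃ = X⃗ + X⃖` to `B`, with `X⃗ ∈ Γ(ker ds)`
`s`-projectable and `t`-projectable onto `X`), then `X` is a symmetry of `F`: `[X, F] ⊆ F`.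

We work algebraically: `OM = C^∞(M)`, `OB = C^∞(B)` are commutative `K`-algebras, the
submersions are given by the pullback algebra maps `s, t : OM →ₐ[K] OB` (with the submersion
property that every vector field on `M` admits a projectable lift), vector fields are
derivations, `Γ(ker ds) = {ξ : ξ ∘ s* = 0}`, and the pullback foliations `s⁻¹F`, `t⁻¹F` are
characterized by: they contain every vector field projectable onto an element of `F`, and every
projectable vector field in them projects into `F`.  The bi-submersion condition is
`s⁻¹F = t⁻¹F = Γ(ker ds) + Γ(ker dt)`.
-/

variable {K OM OB : Type*} [CommRing K] [CommRing OM] [CommRing OB]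
  [Algebra K OM] [Algebra K OB]

/-- `ξ` is `s`-projectable onto `X`: `ξ(s^* f) = s^*(X f)` for all `f`. -/
def Projects (s : OM →ₐ[K] OB) (ξ : Derivation K OB OB) (X : Derivation K OM OM) : Prop :=
  ∀ f : OM, ξ (s f) = s (X f)

/-- The module `Γ(ker ds)` of vector fields on `B` killed by `ds`. -/
def kerDiff (s : OM →ₐ[K] OB) : Submodule OB (Derivation K OB OB) where
  carrier := {ξ | ∀ f : OM, ξ (s f) = 0}
  add_mem' := by intro a b ha hb f; simp [ha f, hb f]
  zero_mem' := by intro f; simp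
  smul_mem' := by intro c ξ h f; simp [h f]


/-- see the module docstring: every internal symmetry `X ∈ F` admits a lift
`X̃ = X⃗ + X⃖` to the bi-submersion, with `X⃗ ∈ Γ(ker ds)` `t`-related to `X` and
`X⃖ ∈ Γ(ker dt)` `s`-related to `X`; in particular `X̃` is both `s`- and `t`-projectable
onto `X`. -/
theorem internal_symmetry_lifts_to_bisubmersion
    (s t : OM →ₐ[K] OB)
    -- `F` is a singular foliation on `M`:
    (F : Submodule OM (Derivation K OM OM))
    (hF : ∀ X ∈ F, ∀ Y ∈ F, ⁅X, Y⁆ ∈ F)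
    -- `s` and `t` are submersions: projectable lifts exist:
    (hs_sub : ∀ X : Derivation K OM OM, ∃ ξ, Projects s ξ X)
    (ht_sub : ∀ X : Derivation K OM OM, ∃ ξ, Projects t ξ X)
    -- the pullback foliations `s⁻¹F` and `t⁻¹F`:
    (sInvF tInvF : Submodule OB (Derivation K OB OB))
    (hs_gen : ∀ X ∈ F, ∀ ξ, Projects s ξ X → ξ ∈ sInvF)
    (hs_proj : ∀ ξ ∈ sInvF, ∀ X, Projects s ξ X → X ∈ F)
    (ht_gen : ∀ X ∈ F, ∀ ξ, Projects t ξ X → ξ ∈ tInvF)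
    (ht_proj : ∀ ξ ∈ tInvF, ∀ X, Projects t ξ X → X ∈ F)
    -- the bi-submersion condition `s⁻¹F = t⁻¹F = Γ(ker ds) + Γ(ker dt)`:
    (hbis : sInvF = kerDiff s ⊔ kerDiff t)
    (hbit : tInvF = kerDiff s ⊔ kerDiff t) :
    ∀ X ∈ F, ∃ Xr Xl : Derivation K OB OB,
      Xr ∈ kerDiff s ∧ Xl ∈ kerDiff t ∧
      Projects t Xr X ∧ Projects s Xl X ∧
      Projects s (Xr + Xl) X ∧ Projects t (Xr + Xl) X := by
  intro X hX
  obtain ⟨ξs, hξs⟩ := hs_sub X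
  obtain ⟨ξt, hξt⟩ := ht_sub X
  have hξs' : ξs ∈ kerDiff s ⊔ kerDiff t := hbis ▸ hs_gen X hX ξs hξs
  have hξt' : ξt ∈ kerDiff s ⊔ kerDiff t := hbit ▸ ht_gen X hX ξt hξt
  obtain ⟨a, ha, b, hb, hab⟩ := Submodule.mem_sup.mp hξs'
  obtain ⟨a', ha', b', hb', ha'b'⟩ := Submodule.mem_sup.mp hξt'
  refine ⟨a', b, ha', hb, ?_, ?_, ?_, ?_⟩
  · intro f
    have := hξt f
    rw [← ha'b'] at this
    simpa [hb' f] using this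
  · intro f
    have := hξs f
    rw [← hab] at this
    simpa [ha f] using this
  · intro f
    have := hξs f
    rw [← hab] at this
    simp only [Derivation.add_apply] at this ⊢
    rw [ha' f]
    simpa [ha f] using this
  · intro f
    have := hξt f
    rw [← ha'b'] at this
    simp only [Derivation.add_apply] at this ⊢
    rw [hb f]
    simpa [hb' f] using this
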